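/- Let Π be a normal logic program and L a consistent set of literals over Π. If for some integer i ≥ 0 one has Σ_{Γ ∈ Λ_{i+1}(Π)} |SP(Π|(L ∪ B(Γ)))| = 0, then Σ_{Γ ∈ Λ_j(Π)} |SP(Π|(L ∪ B(Γ)))| = 0 for every j ≥ i+1. (Consequently a_j^L = a_i^L for all j ≥ i.) -/
import Mathlib


open scoped Classical

/-- A normal logic program rule: head is an atom (`some a`) or ⊥ (`none`),
with positive body `pos` and negative body `neg`. -/
structure ASPRule (V : Type*) where
  head : Option V
  pos : Finset V
  neg : Finset V

/-- A normal logic program is a finite set of rules. -/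
abbrev ASPProgram (V : Type*) := Finset (ASPRule V)

variable {V : Type*}

/-- Atoms occurring in a rule. -/
noncomputable def ruleAtoms (r : ASPRule V) : Finset V :=
  r.head.toFinset ∪ r.pos ∪ r.neg

/-- `at(Π)`: atoms occurring in a program. -/
noncomputable def progAtoms (P : ASPProgram V) : Finset V := P.sup ruleAtoms

/-- The body of rule `r` is satisfied by interpretation `I`:
`B⁺(r) ⊆ I` and `B⁻(r) ∩ I = ∅`. -/
def bodySat (I : Finset V) (r : ASPRule V) : Prop :=
  r.pos ⊆ I ∧ ∀ a ∈ r.neg, a ∉ I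

/-- `I` satisfies rule `r`: whenever the body is satisfied, the head is an
atom belonging to `I` (so a constraint, with head ⊥, is satisfied iff its body is not). -/
def ruleSat (I : Finset V) (r : ASPRule V) : Prop :=
  bodySat I r → ∃ a, r.head = some a ∧ a ∈ I

/-- `I` satisfies every rule of `P`. -/
def satisfiesAll (P : ASPProgram V) (I : Finset V) : Prop := ∀ r ∈ P, ruleSat I r

/-- `I` is a model of `P` (interpretations are subsets of `at(P)`). -/
def isModel (P : ASPProgram V) (I : Finset V) : Prop :=
  I ⊆ progAtoms P ∧ satisfiesAll P I

/-- `I` is a supported model of `P`: a model in which every atom of `I` has a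
supporting rule; equivalently a model of Clark's completion `compl(P)`. -/
def isSupported (P : ASPProgram V) (I : Finset V) : Prop :=
  isModel P I ∧ ∀ a ∈ I, ∃ r ∈ P, r.head = some a ∧ bodySat I r

/-- `SP(P)`: the set of supported models of `P`,
i.e. the models of Clark's completion `compl(P)`. -/
def SP (P : ASPProgram V) : Set (Finset V) := {I | isSupported P I}

/-- The GL-reduct `P^I`. -/
noncomputable def reduct (P : ASPProgram V) (I : Finset V) : ASPProgram V :=
  (P.filter (fun r => ∀ a ∈ r.neg, a ∉ I)).image
    (fun r => (⟨r.head, r.pos, ∅⟩ : ASPRule V))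

/-- `I` is an answer set of `P`: a ⊆-minimal model of the GL-reduct `P^I`. -/
def isAnswerSet (P : ASPProgram V) (I : Finset V) : Prop :=
  I ⊆ progAtoms P ∧ satisfiesAll (reduct P I) I ∧
    ∀ J ⊆ I, satisfiesAll (reduct P I) J → J = I

/-- `AS(P)`: the set of answer sets of `P`. -/
def AS (P : ASPProgram V) : Set (Finset V) := {I | isAnswerSet P I}

/-- A literal: an atom or a negated atom. -/
inductive ASPLit (V : Type*) where
  | pos (a : V)
  | neg (a : V)

/-- The atom of a literal. -/
def litAtom : ASPLit V → V
  | .pos a => a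
  | .neg a => a

/-- Satisfaction of a literal by an interpretation. -/
def litSat (I : Finset V) : ASPLit V → Prop
  | .pos a => a ∈ I
  | .neg a => a ∉ I

/-- `ic(ℓ)`: the constraint whose body is the complementary literal of `ℓ`:
`ic(a) = (⊥ ← ¬ a)` and `ic(¬ a) = (⊥ ← a)`. -/
def ic : ASPLit V → ASPRule V
  | .pos a => ⟨none, ∅, {a}⟩
  | .neg a => ⟨none, {a}, ∅⟩

/-- `Π|L := Π ∪ {ic(ℓ) : ℓ ∈ L}`. -/
noncomputable def assumeP (P : ASPProgram V) (L : Finset (ASPLit V)) : ASPProgram V :=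
  P ∪ L.image ic

/-- `L` is a set of literals over `P`. -/
def litsOver (P : ASPProgram V) (L : Finset (ASPLit V)) : Prop :=
  ∀ ℓ ∈ L, litAtom ℓ ∈ progAtoms P

/-- `L` is consistent: it contains no atom together with its negation. -/
def consistentLits (L : Finset (ASPLit V)) : Prop :=
  ∀ a : V, ¬ (ASPLit.pos a ∈ L ∧ ASPLit.neg a ∈ L)

/-- Edge of the positive dependency digraph `DP(P)`. -/
def dpEdge (P : ASPProgram V) (a b : V) : Prop :=
  ∃ r ∈ P, a ∈ r.pos ∧ r.head = some b

/-- `C` is the vertex set of a directed cycle of `DP(P)`, i.e. of a nonempty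
directed walk whose first and last vertices coincide. -/
def isCycleSet (P : ASPProgram V) (C : Finset V) : Prop :=
  ∃ (v : V) (l : List V),
    List.Chain (dpEdge P) v (l ++ [v]) ∧ (v :: l).toFinset = C

/-- `cycles(P)`: the finite collection of vertex sets of directed cycles of `DP(P)`. -/
noncomputable def cyclesF (P : ASPProgram V) : Finset (Finset V) :=
  (progAtoms P).powerset.filter (isCycleSet P)

/-- `ES(C)`: the external supports of `C`. -/
noncomputable def extSupport (P : ASPProgram V) (C : Finset V) : Finset V :=
  (progAtoms P).filter (fun a =>
    ∃ r ∈ P, a ∈ r.pos ∧ (∃ h, r.head = some h ∧ h ∈ C) ∧ r.pos ∩ C = ∅)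

/-- The unsupported constraint `λ(C) := (⊥, C, ES(C))`. -/
noncomputable def unsupC (P : ASPProgram V) (C : Finset V) : ASPRule V :=
  ⟨none, C, extSupport P C⟩

/-- `Λ_d(P)`: the collection of sets `{λ(C) : C ∈ 𝒞}` for `𝒞 ⊆ cycles(P)` with `|𝒞| = d`. -/
noncomputable def Lam (P : ASPProgram V) (d : ℕ) : Finset (Finset (ASPRule V)) :=
  ((cyclesF P).powersetCard d).image (fun S => S.image (unsupC P))

/-- `B(Γ)`: the body literals of a set `Γ` of unsupported constraints, read as assumptions. -/
noncomputable def bodyLits (Γ : Finset (ASPRule V)) : Finset (ASPLit V) :=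
  Γ.sup (fun r => r.pos.image ASPLit.pos ∪ r.neg.image ASPLit.neg)

/-- The incremental count `a_d^L`. -/
noncomputable def incCount (P : ASPProgram V) (L : Finset (ASPLit V)) (d : ℕ) : ℤ :=
  ∑ i ∈ Finset.range (d + 1), (-1 : ℤ) ^ i *
    ∑ Γ ∈ Lam P i, ((SP (assumeP P (L ∪ bodyLits Γ))).ncard : ℤ)

lemma ruleAtoms_ic (ℓ : ASPLit V) : ruleAtoms (ic ℓ) = {litAtom ℓ} := by
  cases ℓ <;> simp [ruleAtoms, ic, litAtom]

lemma progAtoms_assumeP (P : ASPProgram V) (M : Finset (ASPLit V))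
    (h : litsOver P M) : progAtoms (assumeP P M) = progAtoms P := by
  apply le_antisymm
  · rw [assumeP, progAtoms, Finset.sup_union, Finset.sup_image]
    refine sup_le le_rfl (Finset.sup_le fun ℓ hℓ => ?_)
    rw [Function.comp_apply, ruleAtoms_ic]
    simpa using h ℓ hℓ
  · exact Finset.sup_mono Finset.subset_union_left

lemma litsOver_bodyLits (P : ASPProgram V) (d : ℕ) (Γ : Finset (ASPRule V))
    (hΓ : Γ ∈ Lam P d) : litsOver P (bodyLits Γ) := by
  obtain ⟨S, hS, rfl⟩ := Finset.mem_image.mp hΓ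
  obtain ⟨hSsub, -⟩ := Finset.mem_powersetCard.mp hS
  intro ℓ hℓ
  rw [bodyLits, Finset.mem_sup] at hℓ
  obtain ⟨r, hr, hℓr⟩ := hℓ
  obtain ⟨C, hC, rfl⟩ := Finset.mem_image.mp hr
  have hC' : C ∈ cyclesF P := hSsub hC
  have hCsub : C ⊆ progAtoms P :=
    Finset.mem_powerset.mp (Finset.mem_filter.mp hC').1
  rcases Finset.mem_union.mp hℓr with h | h
  · obtain ⟨a, ha, rfl⟩ := Finset.mem_image.mp h
    exact hCsub ha
  · obtain ⟨a, ha, rfl⟩ := Finset.mem_image.mp h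
    exact Finset.mem_of_mem_filter a ha

lemma SP_finite (Q : ASPProgram V) : (SP Q).Finite :=
  Set.Finite.subset (Finset.finite_toSet (progAtoms Q).powerset)
    (fun _ hI => Finset.mem_coe.mpr (Finset.mem_powerset.mpr hI.1.1))

lemma SP_assumeP_antitone (P : ASPProgram V) (M M' : Finset (ASPLit V))
    (hMM : M ⊆ M') (hat : progAtoms (assumeP P M') = progAtoms (assumeP P M)) :
    SP (assumeP P M') ⊆ SP (assumeP P M) := by
  intro I hI
  obtain ⟨⟨hIsub, hsat⟩, hsup⟩ := hI
  refine ⟨⟨hat ▸ hIsub, fun r hr => hsat r ?_⟩, fun a ha => ?_⟩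
  · rcases Finset.mem_union.mp hr with h | h
    · exact Finset.mem_union_left _ h
    · exact Finset.mem_union_right _ (Finset.image_subset_image hMM h)
  · obtain ⟨r, hr, hhead, hbody⟩ := hsup a ha
    refine ⟨r, ?_, hhead, hbody⟩
    rcases Finset.mem_union.mp hr with h | h
    · exact Finset.mem_union_left _ h
    · obtain ⟨ℓ, -, rfl⟩ := Finset.mem_image.mp h
      cases ℓ <;> simp [ic] at hhead

/-- If the inner sum vanishes at depth `i + 1`, then it vanishes
at every depth `j ≥ i + 1` (and consequently `a_j^L = a_i^L` for all `j ≥ i`). -/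
theorem inner_sum_vanishes_onwards (V : Type*) (P : ASPProgram V)
    (L : Finset (ASPLit V)) (hover : litsOver P L) (hcons : consistentLits L)
    (i : ℕ)
    (hzero : ∑ Γ ∈ Lam P (i + 1), (SP (assumeP P (L ∪ bodyLits Γ))).ncard = 0) :
    (∀ j, i + 1 ≤ j →
        ∑ Γ ∈ Lam P j, (SP (assumeP P (L ∪ bodyLits Γ))).ncard = 0) ∧
      (∀ j, i ≤ j → incCount P L j = incCount P L i) := by
  have key : ∀ j, i + 1 ≤ j →
      ∑ Γ ∈ Lam P j, (SP (assumeP P (L ∪ bodyLits Γ))).ncard = 0 := by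
    intro j hj
    refine Finset.sum_eq_zero fun Γ' hΓ' => ?_
    obtain ⟨S', hS', rfl⟩ := Finset.mem_image.mp hΓ'
    obtain ⟨hS'sub, hS'card⟩ := Finset.mem_powersetCard.mp hS'
    obtain ⟨S, hSsub, hScard⟩ := Finset.exists_subset_card_eq (n := i + 1)
      (by omega : i + 1 ≤ S'.card)
    have hSmem : S.image (unsupC P) ∈ Lam P (i + 1) :=
      Finset.mem_image.mpr ⟨S, Finset.mem_powersetCard.mpr ⟨hSsub.trans hS'sub, hScard⟩, rfl⟩
    have hz : (SP (assumeP P (L ∪ bodyLits (S.image (unsupC P))))).ncard = 0 :=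
      (Finset.sum_eq_zero_iff.mp hzero) _ hSmem
    have hempty : SP (assumeP P (L ∪ bodyLits (S.image (unsupC P)))) = ∅ :=
      (Set.ncard_eq_zero (SP_finite _)).mp hz
    have hsub : SP (assumeP P (L ∪ bodyLits (S'.image (unsupC P)))) ⊆
        SP (assumeP P (L ∪ bodyLits (S.image (unsupC P)))) := by
      apply SP_assumeP_antitone
      · exact Finset.union_subset_union_right
          (Finset.le_iff_subset.mp
            (Finset.sup_mono (Finset.image_subset_image hSsub)))
      · have h1 : litsOver P (L ∪ bodyLits (S.image (unsupC P))) := by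
          intro ℓ hℓ
          rcases Finset.mem_union.mp hℓ with h | h
          · exact hover ℓ h
          · exact litsOver_bodyLits P (i + 1) _ hSmem ℓ h
        have h2 : litsOver P (L ∪ bodyLits (S'.image (unsupC P))) := by
          intro ℓ hℓ
          rcases Finset.mem_union.mp hℓ with h | h
          · exact hover ℓ h
          · exact litsOver_bodyLits P j _ hΓ' ℓ h
        rw [progAtoms_assumeP P _ h1, progAtoms_assumeP P _ h2]
    rw [Set.ncard_eq_zero (Set.Finite.subset (SP_finite _) hsub)]
    exact Set.subset_empty_iff.mp (hempty ▸ hsub)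
  refine ⟨key, fun j hj => ?_⟩
  induction j with
  | zero =>
    have : i = 0 := Nat.le_zero.mp hj
    rw [this]
  | succ n ih =>
    rcases Nat.lt_or_ge i (n + 1) with h | h
    · have hi : i ≤ n := by omega
      have hz : ∑ Γ ∈ Lam P (n + 1),
          ((SP (assumeP P (L ∪ bodyLits Γ))).ncard : ℤ) = 0 := by
        have := key (n + 1) (by omega)
        have : ((∑ Γ ∈ Lam P (n + 1),
            (SP (assumeP P (L ∪ bodyLits Γ))).ncard : ℕ) : ℤ) = 0 := by
          rw [this]; rfl
        rwa [Nat.cast_sum] at this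
      have : incCount P L (n + 1) = incCount P L n + (-1 : ℤ) ^ (n + 1) *
          ∑ Γ ∈ Lam P (n + 1), ((SP (assumeP P (L ∪ bodyLits Γ))).ncard : ℤ) := by
        rw [incCount, Finset.sum_range_succ]; rfl
      rw [this, hz, ih hi]; ring
    · have : i = n + 1 := by omega
      rw [this]
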